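/- Let m ≥ 1 and x : Fin m → ℝ, and for ω > 0 define the mellowmax value mm_ω(x) = log( (1/m)·∑_i exp(ω·x_i) ) / ω. Then mm_ω(x) tends to max_i x_i as ω → ∞, and mm_ω(x) tends to the mean (1/m)·∑_i x_i as ω → 0 from the right. -/

import Mathlib

/-- The maximum coordinate of `x : Fin m → ℝ`, for `m ≥ 1`. -/
noncomputable def maxVal {m : ℕ} (hm : 1 ≤ m) (x : Fin m → ℝ) : ℝ :=
  Finset.univ.sup' ⟨⟨0, hm⟩, Finset.mem_univ _⟩ x

/-- The mellowmax value `mm_ω(x) = log((1/m)·∑ i, exp(ω·x_i)) / ω`. -/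
noncomputable def mellowmax {m : ℕ} (x : Fin m → ℝ) (ω : ℝ) : ℝ :=
  Real.log ((1 / (m : ℝ)) * ∑ i, Real.exp (ω * x i)) / ω

/-- The mellowmax value converges to the max as `ω → ∞`, and to the mean
`(1/m)·∑ i, x_i` as `ω → 0⁺`. -/
theorem mellowmax_tendsto_max_and_mean
    {m : ℕ} (hm : 1 ≤ m) (x : Fin m → ℝ) :
    Filter.Tendsto (fun ω => mellowmax x ω) Filter.atTop (nhds (maxVal hm x)) ∧
    Filter.Tendsto (fun ω => mellowmax x ω) (nhdsWithin 0 (Set.Ioi 0))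
      (nhds ((1 / (m : ℝ)) * ∑ i, x i)) := by
  have hm0 : (0:ℝ) < m := by exact_mod_cast hm
  have hm0' : (1:ℝ)/m > 0 := by positivity
  set M := maxVal hm x with hM
  have hxM : ∀ i, x i ≤ M := fun i => Finset.le_sup' x (Finset.mem_univ i)
  have hsumpos : ∀ ω : ℝ, 0 < (1 / (m : ℝ)) * ∑ i, Real.exp (ω * x i) := by
    intro ω
    apply mul_pos hm0'
    apply Finset.sum_pos (fun i _ => Real.exp_pos _)
    exact ⟨⟨0, hm⟩, Finset.mem_univ _⟩
  constructor
  · -- squeeze between M + log(1/m)/ω and M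
    have hlow : ∀ ω : ℝ, 0 < ω → M + Real.log (1/(m:ℝ)) / ω ≤ mellowmax x ω := by
      intro ω hω
      obtain ⟨i0, _, hi0⟩ := Finset.exists_mem_eq_sup' (⟨⟨0, hm⟩, Finset.mem_univ _⟩ :
        (Finset.univ : Finset (Fin m)).Nonempty) x
      have h1 : Real.exp (ω * M) ≤ ∑ i, Real.exp (ω * x i) := by
        rw [hM, maxVal, hi0]
        exact Finset.single_le_sum (f := fun i => Real.exp (ω * x i)) (fun i _ => (Real.exp_pos _).le) (Finset.mem_univ i0)
      have h2 : (1/(m:ℝ)) * Real.exp (ω * M) ≤ (1/(m:ℝ)) * ∑ i, Real.exp (ω * x i) :=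
        mul_le_mul_of_nonneg_left h1 hm0'.le
      have h3 : Real.log ((1/(m:ℝ)) * Real.exp (ω * M)) ≤
          Real.log ((1/(m:ℝ)) * ∑ i, Real.exp (ω * x i)) :=
        Real.log_le_log (by positivity) h2
      rw [Real.log_mul (ne_of_gt hm0') (Real.exp_ne_zero _), Real.log_exp] at h3
      have : (Real.log (1/(m:ℝ)) + ω * M) / ω ≤
          Real.log ((1/(m:ℝ)) * ∑ i, Real.exp (ω * x i)) / ω :=
        div_le_div_of_nonneg_right h3 hω.le
      calc M + Real.log (1/(m:ℝ)) / ω = (Real.log (1/(m:ℝ)) + ω * M) / ω := by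
            field_simp; ring
        _ ≤ mellowmax x ω := this
    have hup : ∀ ω : ℝ, 0 < ω → mellowmax x ω ≤ M := by
      intro ω hω
      have h1 : ∑ i, Real.exp (ω * x i) ≤ ∑ _i : Fin m, Real.exp (ω * M) := by
        apply Finset.sum_le_sum
        intro i _
        exact Real.exp_le_exp.2 (mul_le_mul_of_nonneg_left (hxM i) hω.le)
      have h2 : (1/(m:ℝ)) * ∑ i, Real.exp (ω * x i) ≤ Real.exp (ω * M) := by
        have : ∑ _i : Fin m, Real.exp (ω * M) = m * Real.exp (ω * M) := by
          simp [Finset.sum_const, mul_comm]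
        calc (1/(m:ℝ)) * ∑ i, Real.exp (ω * x i)
            ≤ (1/(m:ℝ)) * (m * Real.exp (ω * M)) := by
              rw [← this]; exact mul_le_mul_of_nonneg_left h1 hm0'.le
          _ = Real.exp (ω * M) := by field_simp
      have h3 : Real.log ((1/(m:ℝ)) * ∑ i, Real.exp (ω * x i)) ≤ ω * M :=
        (Real.log_le_iff_le_exp (hsumpos ω)).2 h2
      rw [mellowmax, div_le_iff₀ hω]
      calc Real.log ((1/(m:ℝ)) * ∑ i, Real.exp (ω * x i)) ≤ ω * M := h3
        _ = M * ω := mul_comm _ _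
    have hl : Filter.Tendsto (fun ω : ℝ => M + Real.log (1/(m:ℝ)) / ω)
        Filter.atTop (nhds M) := by
      have : Filter.Tendsto (fun ω : ℝ => Real.log (1/(m:ℝ)) / ω)
          Filter.atTop (nhds 0) := Filter.Tendsto.div_atTop tendsto_const_nhds Filter.tendsto_id
      simpa using tendsto_const_nhds.add this
    refine tendsto_of_tendsto_of_tendsto_of_le_of_le' hl tendsto_const_nhds ?_ ?_
    · filter_upwards [Filter.eventually_gt_atTop 0] with ω hω using hlow ω hω
    · filter_upwards [Filter.eventually_gt_atTop 0] with ω hω using hup ω hω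
  · -- derivative argument
    set f : ℝ → ℝ := fun ω => Real.log ((1 / (m : ℝ)) * ∑ i, Real.exp (ω * x i)) with hf
    have hg : HasDerivAt (fun ω : ℝ => (1 / (m : ℝ)) * ∑ i, Real.exp (ω * x i))
        ((1 / (m : ℝ)) * ∑ i, x i) 0 := by
      have hterm : ∀ i : Fin m, HasDerivAt (fun ω : ℝ => Real.exp (ω * x i)) (x i) 0 := by
        intro i
        have := ((hasDerivAt_id (0:ℝ)).mul_const (x i)).exp
        simpa using this
      have hsum : HasDerivAt (fun ω : ℝ => ∑ i, Real.exp (ω * x i)) (∑ i, x i) 0 :=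
        HasDerivAt.fun_sum (fun i _ => hterm i)
      exact hsum.const_mul _
    have hg0 : (1 / (m : ℝ)) * ∑ i : Fin m, Real.exp ((0:ℝ) * x i) = 1 := by
      simp [Finset.sum_const]
      field_simp
    have hfd : HasDerivAt f ((1 / (m : ℝ)) * ∑ i, x i) 0 := by
      have h := hg.log (by rw [hg0]; norm_num)
      rw [hg0, div_one] at h
      exact h
    have hslope := hasDerivAt_iff_tendsto_slope.1 hfd
    have hsub : nhdsWithin (0:ℝ) (Set.Ioi 0) ≤ nhdsWithin 0 {0}ᶜ := by
      apply nhdsWithin_mono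
      intro y hy
      exact ne_of_gt hy
    have := hslope.mono_left hsub
    refine this.congr ?_
    intro ω
    have hf0 : f 0 = 0 := by rw [hf]; simp only; rw [hg0]; simp
    simp only [slope, vsub_eq_sub, hf0, sub_zero, smul_eq_mul]
    show ω⁻¹ * f ω = mellowmax x ω
    simp only [hf, mellowmax]
    ring
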